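/- Let 0 < α ≤ s and let {I_{j_k}} be a family of pairwise disjoint basic cubes satisfying the packing condition Σ_{I_{j_k} ⊂ I} μ(I_{j_k})^{α/s} ≤ 2 μ(I)^{α/s} for every basic cube I. Then for any function f, Σ_k ∫_{I_{j_k}} |f| dH^α_μ ≤ 2 ∫_{∪_k I_{j_k}} |f| dH^α_μ. -/

import Mathlib

open MeasureTheory Set Filter
open scoped ENNReal NNReal Topology

noncomputable section

abbrev Pt (d : ℕ) := EuclideanSpace ℝ (Fin d)

/-- An iterated function system of contractive similitudes on ℝ^d with attractor `K`
satisfying the strong separation condition. -/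
structure IFS (d m : ℕ) where
  S : Fin m → Pt d → Pt d
  r : Fin m → ℝ
  r_pos : ∀ i, 0 < r i
  r_lt_one : ∀ i, r i < 1
  similitude : ∀ i x y, dist (S i x) (S i y) = r i * dist x y
  K : Set (Pt d)
  K_nonempty : K.Nonempty
  K_compact : IsCompact K
  K_invariant : K = ⋃ i, S i '' K
  ssc : Pairwise fun i j => Disjoint (S i '' K) (S j '' K)

namespace IFS

variable {d m : ℕ}

/-- The composition `S_{i₁} ∘ ⋯ ∘ S_{iₙ}` for the word `w = i₁ ⋯ iₙ`. -/
def cylMap (Φ : IFS d m) (w : List (Fin m)) : Pt d → Pt d :=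
  w.foldr (fun i g => Φ.S i ∘ g) id

/-- The basic cube (cylinder set) `K_w = S_{i₁} ∘ ⋯ ∘ S_{iₙ}(K)`. -/
def cyl (Φ : IFS d m) (w : List (Fin m)) : Set (Pt d) :=
  Φ.cylMap w '' Φ.K

/-- `μ` is the self-similar probability measure associated with the probability
vector `p` (with all `p i > 0`), i.e. `μ = ∑ i, p i • μ ∘ S i ⁻¹`, supported on `K`. -/
def SelfSimilar (Φ : IFS d m) (p : Fin m → ℝ≥0∞) (μ : Measure (Pt d)) : Prop :=
  (∑ i, p i = 1) ∧ (∀ i, 0 < p i) ∧ IsProbabilityMeasure μ ∧ μ Φ.K = 1 ∧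
    μ = ∑ i, p i • μ.map (Φ.S i)

/-- The α-dimensional Hausdorff content on `K` associated with `μ`, defined via
coverings by countable families of basic cubes; `s` is the Hausdorff dimension of `K`. -/
def hContent (Φ : IFS d m) (μ : Measure (Pt d)) (s α : ℝ) (E : Set (Pt d)) : ℝ≥0∞ :=
  ⨅ (C : Set (List (Fin m))) (_ : C.Countable) (_ : E ⊆ ⋃ w ∈ C, Φ.cyl w),
    ∑' w : C, μ (Φ.cyl w.1) ^ (α / s)

/-- The dyadic-type Hardy–Littlewood maximal operator over basic cubes containing `x`. -/
def maxOp (Φ : IFS d m) (μ : Measure (Pt d)) (f : Pt d → ℝ) (x : Pt d) : ℝ≥0∞ :=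
  ⨆ (w : List (Fin m)) (_ : x ∈ Φ.cyl w),
    (μ (Φ.cyl w))⁻¹ * ∫⁻ y in Φ.cyl w, ENNReal.ofReal |f y| ∂μ

end IFS

namespace IFS
variable {d m : ℕ}
lemma cylMap_nil (Φ : IFS d m) : Φ.cylMap [] = id := rfl
lemma cylMap_cons (Φ : IFS d m) (i : Fin m) (w : List (Fin m)) :
    Φ.cylMap (i :: w) = Φ.S i ∘ Φ.cylMap w := rfl

lemma S_image_subset (Φ : IFS d m) (i : Fin m) : Φ.S i '' Φ.K ⊆ Φ.K := by
  conv_rhs => rw [Φ.K_invariant]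
  exact subset_iUnion (fun j => Φ.S j '' Φ.K) i

lemma cylMap_image_subset (Φ : IFS d m) (w : List (Fin m)) : Φ.cylMap w '' Φ.K ⊆ Φ.K := by
  induction w with
  | nil => simp [cylMap_nil]
  | cons i w ih =>
    rw [cylMap_cons, Set.image_comp]
    exact (Set.image_mono ih).trans (Φ.S_image_subset i)

lemma cylMap_append (Φ : IFS d m) (u v : List (Fin m)) :
    Φ.cylMap (u ++ v) = Φ.cylMap u ∘ Φ.cylMap v := by
  induction u with
  | nil => rw [List.nil_append, cylMap_nil, Function.id_comp]
  | cons i u ih => rw [List.cons_append, cylMap_cons, cylMap_cons, ih, Function.comp_assoc]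

lemma cyl_subset_of_prefix (Φ : IFS d m) {u v : List (Fin m)} (h : u <+: v) :
    Φ.cyl v ⊆ Φ.cyl u := by
  obtain ⟨t, rfl⟩ := h
  rw [cyl, cylMap_append, Set.image_comp]
  exact Set.image_mono (Φ.cylMap_image_subset t)

lemma S_injective (Φ : IFS d m) (i : Fin m) : Function.Injective (Φ.S i) := by
  intro x y h
  have h0 : Φ.r i * dist x y = 0 := by
    rw [← Φ.similitude, h, dist_self]
  rcases mul_eq_zero.mp h0 with h1 | h1
  · exact absurd h1 (Φ.r_pos i).ne'
  · exact dist_eq_zero.mp h1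

lemma cyl_nonempty (Φ : IFS d m) (w : List (Fin m)) : (Φ.cyl w).Nonempty :=
  Φ.K_nonempty.image _

lemma disjoint_cyl_of_not_prefix (Φ : IFS d m) :
    ∀ (u v : List (Fin m)), ¬ u <+: v → ¬ v <+: u → Disjoint (Φ.cyl u) (Φ.cyl v) := by
  intro u
  induction u with
  | nil => intro v h _; exact absurd List.nil_prefix h
  | cons i u ih =>
    intro v h h'
    match v with
    | [] => exact absurd List.nil_prefix h'
    | j :: v =>
      by_cases hij : i = j
      · subst hij
        rw [List.cons_prefix_cons] at h h'
        simp only [true_and] at h h'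
        have hd := ih v h h'
        have : Φ.cyl (i :: u) = Φ.S i '' Φ.cyl u := by
          rw [cyl, cylMap_cons, Set.image_comp]; rfl
        rw [this]
        have : Φ.cyl (i :: v) = Φ.S i '' Φ.cyl v := by
          rw [cyl, cylMap_cons, Set.image_comp]; rfl
        rw [this]
        exact hd.image ((Φ.S_injective i).injOn) (subset_univ _) (subset_univ _)
      · have h1 : Φ.cyl (i :: u) ⊆ Φ.S i '' Φ.K := by
          rw [cyl, cylMap_cons, Set.image_comp]
          exact Set.image_mono (Φ.cylMap_image_subset u)
        have h2 : Φ.cyl (j :: v) ⊆ Φ.S j '' Φ.K := by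
          rw [cyl, cylMap_cons, Set.image_comp]
          exact Set.image_mono (Φ.cylMap_image_subset v)
        exact (Φ.ssc hij).mono h1 h2

lemma cyl_nested (Φ : IFS d m) {u v : List (Fin m)} (h : (Φ.cyl u ∩ Φ.cyl v).Nonempty) :
    Φ.cyl u ⊆ Φ.cyl v ∨ Φ.cyl v ⊆ Φ.cyl u := by
  by_cases h1 : u <+: v
  · exact Or.inr (Φ.cyl_subset_of_prefix h1)
  by_cases h2 : v <+: u
  · exact Or.inl (Φ.cyl_subset_of_prefix h2)
  · exact absurd (Set.not_nonempty_iff_eq_empty.mpr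
      ((Φ.disjoint_cyl_of_not_prefix u v h1 h2).inter_eq)) (by simpa using h)




lemma hContent_le_tsum (Φ : IFS d m) (μ : Measure (Pt d)) (s α : ℝ)
    {E : Set (Pt d)} {D : Set (List (Fin m))} (hDc : D.Countable)
    (hcov : E ⊆ ⋃ I ∈ D, Φ.cyl I) :
    Φ.hContent μ s α E ≤ ∑' I : D, μ (Φ.cyl I.1) ^ (α / s) :=
  iInf_le_of_le D (iInf_le_of_le hDc (iInf_le _ hcov))

lemma hContent_mono (Φ : IFS d m) (μ : Measure (Pt d)) (s α : ℝ)
    {E F : Set (Pt d)} (h : E ⊆ F) :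
    Φ.hContent μ s α E ≤ Φ.hContent μ s α F :=
  le_iInf fun D => le_iInf fun hDc => le_iInf fun hcov =>
    Φ.hContent_le_tsum μ s α hDc (h.trans hcov)

lemma hContent_le_pow (Φ : IFS d m) (μ : Measure (Pt d)) (s α : ℝ)
    {E : Set (Pt d)} {w : List (Fin m)} (h : E ⊆ Φ.cyl w) :
    Φ.hContent μ s α E ≤ μ (Φ.cyl w) ^ (α / s) := by
  have := Φ.hContent_le_tsum μ s α (Set.countable_singleton w)
    (show E ⊆ ⋃ I ∈ ({w} : Set (List (Fin m))), Φ.cyl I by simpa using h)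
  exact this.trans_eq (tsum_singleton w fun I => μ (Φ.cyl I) ^ (α / s))


lemma key (Φ : IFS d m) (μ : Measure (Pt d)) (s α : ℝ)
    (C : Set (List (Fin m))) (hC : C.Countable) (hdisj : C.PairwiseDisjoint Φ.cyl)
    (hpack : ∀ I : List (Fin m),
      ∑' w : {w : List (Fin m) // w ∈ C ∧ Φ.cyl w ⊆ Φ.cyl I},
        μ (Φ.cyl w.1) ^ (α / s) ≤ 2 * μ (Φ.cyl I) ^ (α / s))
    (A : C → Set (Pt d)) (hA : ∀ w, A w ⊆ Φ.cyl w.1) :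
    ∑' w : C, Φ.hContent μ s α (A w) ≤ 2 * Φ.hContent μ s α (⋃ w, A w) := by
  classical
  haveI : Countable ↥C := hC.to_subtype
  suffices key2 : ∀ D : Set (List (Fin m)), D.Countable →
      (⋃ w, A w) ⊆ ⋃ I ∈ D, Φ.cyl I →
      ∑' w : C, Φ.hContent μ s α (A w) ≤ 2 * ∑' I : D, μ (Φ.cyl I.1) ^ (α / s) by
    have hdiv : (∑' w : C, Φ.hContent μ s α (A w)) / 2 ≤ Φ.hContent μ s α (⋃ w, A w) := by
      refine le_iInf fun D => le_iInf fun hDc => le_iInf fun hcov => ?_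
      refine (ENNReal.div_le_iff_le_mul (Or.inl two_ne_zero) (Or.inl ENNReal.ofNat_ne_top)).mpr ?_
      rw [mul_comm]
      exact key2 D hDc hcov
    calc ∑' w : C, Φ.hContent μ s α (A w)
        = (∑' w : C, Φ.hContent μ s α (A w)) / 2 * 2 :=
          (ENNReal.div_mul_cancel two_ne_zero ENNReal.ofNat_ne_top).symm
      _ ≤ Φ.hContent μ s α (⋃ w, A w) * 2 := mul_le_mul_left hdiv 2
      _ = 2 * Φ.hContent μ s α (⋃ w, A w) := mul_comm _ _
  intro D hDc hcov
  set a := α / s with ha_def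
  let P : C → Prop := fun w => ∃ I ∈ D, Φ.cyl w.1 ⊆ Φ.cyl I ∧ ¬ Φ.cyl I ⊆ Φ.cyl w.1
  let F : C → ℝ≥0∞ := fun w => if P w then μ (Φ.cyl w.1) ^ a else 0
  let G : C → ℝ≥0∞ := fun w =>
    ∑' I : D, (if Φ.cyl I.1 ⊆ Φ.cyl w.1 then μ (Φ.cyl I.1) ^ a else 0)
  have step1 : ∀ w : C, Φ.hContent μ s α (A w) ≤ F w + G w := by
    intro w
    by_cases hP : P w
    · refine le_trans ?_ le_self_add
      have : F w = μ (Φ.cyl w.1) ^ a := if_pos hP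
      rw [this]
      exact Φ.hContent_le_pow μ s α (hA w)
    · refine le_trans ?_ le_add_self
      set D' : Set (List (Fin m)) := {I | I ∈ D ∧ Φ.cyl I ⊆ Φ.cyl w.1} with hD'_def
      have hcov' : A w ⊆ ⋃ I ∈ D', Φ.cyl I := by
        intro x hx
        have hxU : x ∈ ⋃ I ∈ D, Φ.cyl I := hcov (Set.mem_iUnion.mpr ⟨w, hx⟩)
        obtain ⟨I, hID, hxI⟩ := Set.mem_iUnion₂.mp hxU
        have hne : (Φ.cyl I ∩ Φ.cyl w.1).Nonempty := ⟨x, hxI, hA w hx⟩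
        rcases Φ.cyl_nested hne with hIw | hwI
        · exact Set.mem_iUnion₂.mpr ⟨I, ⟨hID, hIw⟩, hxI⟩
        · by_cases hIw2 : Φ.cyl I ⊆ Φ.cyl w.1
          · exact Set.mem_iUnion₂.mpr ⟨I, ⟨hID, hIw2⟩, hxI⟩
          · exact absurd ⟨I, hID, hwI, hIw2⟩ hP
      have h1 : Φ.hContent μ s α (A w) ≤ ∑' I : D', μ (Φ.cyl I.1) ^ a :=
        Φ.hContent_le_tsum μ s α (hDc.mono (fun I hI => hI.1)) hcov'
      refine h1.trans ?_
      have hinj : Function.Injective (fun I : D' => (⟨I.1, I.2.1⟩ : D)) := by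
        intro I J h
        simpa [Subtype.ext_iff] using h
      have hle := ENNReal.tsum_comp_le_tsum_of_injective hinj
        (fun I : D => if Φ.cyl I.1 ⊆ Φ.cyl w.1 then μ (Φ.cyl I.1) ^ a else 0)
      refine le_trans ?_ hle
      refine le_of_eq (tsum_congr fun I => ?_)
      simp only []
      rw [if_pos I.2.2]
  have step3 : ∑' w : C, G w ≤
      ∑' I : D, (if ∃ w : C, Φ.cyl I.1 ⊆ Φ.cyl w.1 then μ (Φ.cyl I.1) ^ a else 0) := by
    have : ∑' w : C, G w = ∑' (I : D) (w : C),
        (if Φ.cyl I.1 ⊆ Φ.cyl w.1 then μ (Φ.cyl I.1) ^ a else 0) := ENNReal.tsum_comm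
    rw [this]
    refine ENNReal.tsum_le_tsum fun I => ?_
    by_cases hex : ∃ w : C, Φ.cyl I.1 ⊆ Φ.cyl w.1
    · obtain ⟨w₀, hw₀⟩ := hex
      have hz : ∀ w : C, w ≠ w₀ →
          (if Φ.cyl I.1 ⊆ Φ.cyl w.1 then μ (Φ.cyl I.1) ^ a else 0) = 0 := by
        intro w hw
        rw [if_neg]
        intro hsub
        have hne : w.1 ≠ w₀.1 := fun h => hw (Subtype.ext h)
        have hd := hdisj w.2 w₀.2 hne
        have hsub2 : Φ.cyl I.1 ⊆ (∅ : Set (Pt d)) :=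
          fun x hx => Set.disjoint_iff.mp hd ⟨hsub hx, hw₀ hx⟩
        obtain ⟨x, hx⟩ := Φ.cyl_nonempty I.1
        exact hsub2 hx
      rw [tsum_eq_single w₀ hz, if_pos hw₀, if_pos ⟨w₀, hw₀⟩]
    · have hz : ∀ w : C,
          (if Φ.cyl I.1 ⊆ Φ.cyl w.1 then μ (Φ.cyl I.1) ^ a else 0) = 0 :=
        fun w => if_neg (fun h => hex ⟨w, h⟩)
      simp only [hz, tsum_zero]
      exact zero_le
  have step4 : ∑' w : C, F w ≤
      ∑' I : D, (if ∃ w : C, Φ.cyl I.1 ⊆ Φ.cyl w.1 then 0 else 2 * μ (Φ.cyl I.1) ^ a) := by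
    have hFsum : ∑' w : C, F w = ∑' w : {w : C | P w}, μ (Φ.cyl w.1.1) ^ a := by
      have ht := tsum_subtype {w : C | P w} (fun w => μ (Φ.cyl w.1) ^ a)
      rw [ht]
      refine tsum_congr fun w => ?_
      by_cases h : P w
      · simp [F, Set.indicator, h]
      · simp [F, Set.indicator, h]
    rw [hFsum]
    by_cases hDne : Nonempty ↥D
    · have hch : ∀ w : {w : C | P w}, ∃ I : D,
          Φ.cyl w.1.1 ⊆ Φ.cyl I.1 ∧ ¬ Φ.cyl I.1 ⊆ Φ.cyl w.1.1 := by
        intro w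
        obtain ⟨I, hID, h1, h2⟩ := w.2
        exact ⟨⟨I, hID⟩, h1, h2⟩
      choose J hJ1 hJ2 using hch
      have hsingle : ∀ w : {w : C | P w}, μ (Φ.cyl w.1.1) ^ a =
          ∑' I : D, (if J w = I then μ (Φ.cyl w.1.1) ^ a else 0) := by
        intro w
        rw [tsum_eq_single (J w) (fun I hI => if_neg (fun h => hI h.symm)), if_pos rfl]
      calc ∑' w : {w : C | P w}, μ (Φ.cyl w.1.1) ^ a
          = ∑' (w : {w : C | P w}) (I : D),
              (if J w = I then μ (Φ.cyl w.1.1) ^ a else 0) := tsum_congr hsingle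
        _ = ∑' (I : D) (w : {w : C | P w}),
              (if J w = I then μ (Φ.cyl w.1.1) ^ a else 0) := ENNReal.tsum_comm
        _ ≤ _ := ?_
      refine ENNReal.tsum_le_tsum fun I => ?_
      by_cases hex : ∃ w : C, Φ.cyl I.1 ⊆ Φ.cyl w.1
      · rw [if_pos hex]
        have hz : ∀ w : {w : C | P w},
            (if J w = I then μ (Φ.cyl w.1.1) ^ a else 0) = 0 := by
          intro w
          rw [if_neg]
          intro hJI
          obtain ⟨w', hw'⟩ := hex
          have h1 : Φ.cyl w.1.1 ⊆ Φ.cyl I.1 := hJI ▸ hJ1 w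
          have h2 : ¬ Φ.cyl I.1 ⊆ Φ.cyl w.1.1 := hJI ▸ hJ2 w
          by_cases heq : w.1.1 = w'.1
          · exact h2 (by rw [heq]; exact hw')
          · have hd := hdisj w.1.2 w'.2 heq
            have hsub : Φ.cyl w.1.1 ⊆ (∅ : Set (Pt d)) :=
              fun x hx => Set.disjoint_iff.mp hd ⟨hx, (h1.trans hw') hx⟩
            obtain ⟨x, hx⟩ := Φ.cyl_nonempty w.1.1
            exact hsub hx
        simp only [hz, tsum_zero, le_refl]
      · rw [if_neg hex]
        have heq : ∑' w : {w : C | P w}, (if J w = I then μ (Φ.cyl w.1.1) ^ a else 0)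
            = ∑' w : {w : {w : C | P w} | J w = I}, μ (Φ.cyl w.1.1.1) ^ a := by
          have ht := tsum_subtype {w : {w : C | P w} | J w = I}
            (fun w => μ (Φ.cyl w.1.1) ^ a)
          rw [ht]
          refine (tsum_congr fun w => ?_).symm
          by_cases h : J w = I
          · simp [Set.indicator, h]
          · simp [Set.indicator, h]
        rw [heq]
        have hinj : Function.Injective
            (fun w : {w : {w : C | P w} | J w = I} =>
              (⟨w.1.1.1, w.1.1.2, by
                have h := hJ1 w.1
                have h2 : J w.1 = I := w.2
                rwa [h2] at h⟩ :
              {w : List (Fin m) // w ∈ C ∧ Φ.cyl w ⊆ Φ.cyl I.1})) := by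
          intro w₁ w₂ h
          simpa [Subtype.ext_iff] using h
        have hle := ENNReal.tsum_comp_le_tsum_of_injective hinj
          (fun w : {w : List (Fin m) // w ∈ C ∧ Φ.cyl w ⊆ Φ.cyl I.1} => μ (Φ.cyl w.1) ^ a)
        exact hle.trans (hpack I.1)
    · have hz : ∀ w : {w : C | P w}, False := by
        intro w
        obtain ⟨I, hID, -⟩ := w.2
        exact hDne ⟨⟨I, hID⟩⟩
      have : ∑' w : {w : C | P w}, μ (Φ.cyl w.1.1) ^ a = 0 := by
        haveI : IsEmpty ↥{w : C | P w} := ⟨hz⟩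
        exact tsum_empty
      rw [this]
      exact zero_le
  calc ∑' w : C, Φ.hContent μ s α (A w)
      ≤ ∑' w : C, (F w + G w) := ENNReal.tsum_le_tsum step1
    _ = ∑' w : C, F w + ∑' w : C, G w := ENNReal.tsum_add
    _ ≤ (∑' I : D, (if ∃ w : C, Φ.cyl I.1 ⊆ Φ.cyl w.1 then 0 else 2 * μ (Φ.cyl I.1) ^ a))
        + ∑' I : D, (if ∃ w : C, Φ.cyl I.1 ⊆ Φ.cyl w.1 then μ (Φ.cyl I.1) ^ a else 0) :=
        add_le_add step4 step3
    _ = ∑' I : D, ((if ∃ w : C, Φ.cyl I.1 ⊆ Φ.cyl w.1 then 0 else 2 * μ (Φ.cyl I.1) ^ a)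
        + (if ∃ w : C, Φ.cyl I.1 ⊆ Φ.cyl w.1 then μ (Φ.cyl I.1) ^ a else 0)) :=
        ENNReal.tsum_add.symm
    _ ≤ ∑' I : D, 2 * μ (Φ.cyl I.1) ^ a := by
        refine ENNReal.tsum_le_tsum fun I => ?_
        by_cases hex : ∃ w : C, Φ.cyl I.1 ⊆ Φ.cyl w.1
        · rw [if_pos hex, if_pos hex, zero_add]
          exact le_mul_of_one_le_left (zero_le) one_le_two
        · rw [if_neg hex, if_neg hex, add_zero]
    _ = 2 * ∑' I : D, μ (Φ.cyl I.1) ^ a := ENNReal.tsum_mul_left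

end IFS

/-- The Choquet integral of `g` over `E` with respect to the monotone set function `ν`. -/
def choquetInt {X : Type*} (ν : Set X → ℝ≥0∞) (E : Set X) (g : X → ℝ≥0∞) : ℝ≥0∞ :=
  ∫⁻ t in Set.Ioi (0 : ℝ), ν {x ∈ E | ENNReal.ofReal t < g x}

/-- `log⁺ t = max (0, log t)`. -/
def posLog (t : ℝ) : ℝ := max 0 (Real.log t)

/-- Under the packing condition, the sum of the Choquet integrals over the cubes is at most
twice the Choquet integral over the union. -/
theorem packing_choquet (d m : ℕ) (Φ : IFS d m) (p : Fin m → ℝ≥0∞)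
    (μ : Measure (Pt d)) (hμ : Φ.SelfSimilar p μ)
    (s : ℝ) (hs : 0 < s) (hdim : ∑ i, Φ.r i ^ s = 1)
    (α : ℝ) (hα : 0 < α) (hαs : α ≤ s)
    (C : Set (List (Fin m))) (hC : C.Countable) (hdisj : C.PairwiseDisjoint Φ.cyl)
    (hpack : ∀ I : List (Fin m),
      ∑' w : {w : List (Fin m) // w ∈ C ∧ Φ.cyl w ⊆ Φ.cyl I},
        μ (Φ.cyl w.1) ^ (α / s) ≤ 2 * μ (Φ.cyl I) ^ (α / s))
    (f : Pt d → ℝ)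
    (hf : choquetInt (Φ.hContent μ s α) (⋃ w ∈ C, Φ.cyl w)
      (fun x => ENNReal.ofReal |f x|) < ∞) :
    ∑' w : C, choquetInt (Φ.hContent μ s α) (Φ.cyl w.1)
        (fun x => ENNReal.ofReal |f x|) ≤
      2 * choquetInt (Φ.hContent μ s α) (⋃ w ∈ C, Φ.cyl w)
        (fun x => ENNReal.ofReal |f x|) := by
  classical
  haveI : Countable ↥C := hC.to_subtype
  have hmeas : ∀ w : C, Measurable fun t : ℝ =>
      Φ.hContent μ s α {x ∈ Φ.cyl w.1 | ENNReal.ofReal t < ENNReal.ofReal |f x|} := by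
    intro w
    refine Antitone.measurable fun t₁ t₂ hle => ?_
    refine Φ.hContent_mono μ s α ?_
    intro x hx
    exact ⟨hx.1, lt_of_le_of_lt (ENNReal.ofReal_le_ofReal hle) hx.2⟩
  simp only [choquetInt]
  calc ∑' w : C, ∫⁻ t in Set.Ioi (0 : ℝ),
        Φ.hContent μ s α {x ∈ Φ.cyl w.1 | ENNReal.ofReal t < ENNReal.ofReal |f x|}
      = ∫⁻ t in Set.Ioi (0 : ℝ), ∑' w : C,
          Φ.hContent μ s α {x ∈ Φ.cyl w.1 | ENNReal.ofReal t < ENNReal.ofReal |f x|} :=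
        (lintegral_tsum fun w => (hmeas w).aemeasurable).symm
    _ ≤ ∫⁻ t in Set.Ioi (0 : ℝ), 2 *
          Φ.hContent μ s α {x ∈ (⋃ w ∈ C, Φ.cyl w) | ENNReal.ofReal t < ENNReal.ofReal |f x|} := by
        refine lintegral_mono fun t => ?_
        have hk := Φ.key μ s α C hC hdisj hpack
          (fun w => {x ∈ Φ.cyl w.1 | ENNReal.ofReal t < ENNReal.ofReal |f x|})
          (fun w => fun x hx => hx.1)
        have hset : (⋃ w : C, {x ∈ Φ.cyl w.1 | ENNReal.ofReal t < ENNReal.ofReal |f x|})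
            = {x ∈ (⋃ w ∈ C, Φ.cyl w) | ENNReal.ofReal t < ENNReal.ofReal |f x|} := by
          ext x
          simp only [Set.mem_iUnion, Set.mem_setOf_eq]
          constructor
          · rintro ⟨w, h1, h2⟩
            exact ⟨⟨w.1, w.2, h1⟩, h2⟩
          · rintro ⟨⟨i, hi, h1⟩, h2⟩
            exact ⟨⟨i, hi⟩, h1, h2⟩
        rw [hset] at hk
        exact hk
    _ = 2 * ∫⁻ t in Set.Ioi (0 : ℝ),
          Φ.hContent μ s α {x ∈ (⋃ w ∈ C, Φ.cyl w) | ENNReal.ofReal t < ENNReal.ofReal |f x|} :=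
        lintegral_const_mul' 2 _ ENNReal.ofNat_ne_top
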